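/- Let H be a Hopf algebra and a, b, c ∈ H grouplike elements satisfying ab = cba, ac = ca, bc = cb. Then ∂²(a ⊗ b) = 1 ⊗ c ⊗ c ⊗ 1, where for F ∈ H⊗H, ∂F = (1⊗F)(id⊗Δ)(F)(Δ⊗id)(F⁻¹)(F⁻¹⊗1), and ∂ of a 3-cochain is as defined by ∂Φ = Φ₂₃₄ Φ_{1(23)4} Φ₁₂₃ (Φ⁻¹)_{(12)34} (Φ⁻¹)_{12(34)}. In particular ∂(a⊗b) need not be a 3-cocycle. -/
import Mathlib


open TensorProduct

section

variable (k H : Type*) [Field k] [Ring H] [HopfAlgebra k H]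

/-- The coboundary of a 2-cochain `F ∈ H ⊗ H` with (two-sided) inverse `Finv`:
`∂F = (1 ⊗ F)·(id ⊗ Δ)(F)·(Δ ⊗ id)(F⁻¹)·(F⁻¹ ⊗ 1) ∈ H^{⊗3}`. -/
noncomputable def del2 (F Finv : H ⊗[k] H) : H ⊗[k] (H ⊗[k] H) :=
  ((1 : H) ⊗ₜ[k] F) *
    (TensorProduct.map LinearMap.id (Coalgebra.comul (R := k)) F) *
    ((TensorProduct.assoc k H H H)
      (TensorProduct.map (Coalgebra.comul (R := k)) LinearMap.id Finv)) *
    ((TensorProduct.assoc k H H H) (Finv ⊗ₜ[k] (1 : H)))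

/-- The coboundary of a 3-cochain `Φ ∈ H^{⊗3}` with (two-sided) inverse `Φinv`,
in leg notation: `∂Φ = Φ₂₃₄ · Φ_{1(23)4} · Φ₁₂₃ · (Φ⁻¹)_{(12)34} · (Φ⁻¹)_{12(34)}`. -/
noncomputable def del3 (Φ Φinv : H ⊗[k] (H ⊗[k] H)) : H ⊗[k] (H ⊗[k] (H ⊗[k] H)) :=
  ((1 : H) ⊗ₜ[k] Φ) *
    (TensorProduct.map LinearMap.id
      ((TensorProduct.assoc k H H H).toLinearMap ∘ₗ
        TensorProduct.map (Coalgebra.comul (R := k)) LinearMap.id) Φ) *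
    (TensorProduct.map LinearMap.id
      (TensorProduct.map LinearMap.id ((TensorProduct.mk k H H).flip (1 : H))) Φ) *
    ((TensorProduct.assoc k H H (H ⊗[k] H))
      (TensorProduct.map (Coalgebra.comul (R := k)) LinearMap.id Φinv)) *
    (TensorProduct.map LinearMap.id
      (TensorProduct.map LinearMap.id (Coalgebra.comul (R := k))) Φinv)


lemma comul_unit_inv (u : Hˣ) (hu : Coalgebra.comul (R := k) (u : H) = (u : H) ⊗ₜ[k] (u : H)) :
    Coalgebra.comul (R := k) ((u⁻¹ : Hˣ) : H) = ((u⁻¹ : Hˣ) : H) ⊗ₜ[k] ((u⁻¹ : Hˣ) : H) := by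
  have h1 : Coalgebra.comul (R := k) ((u⁻¹ : Hˣ) : H) * Coalgebra.comul (R := k) (u : H) = 1 := by
    rw [← Bialgebra.comul_mul, Units.inv_mul, Bialgebra.comul_one]
  have h2 : Coalgebra.comul (R := k) (u : H) * (((u⁻¹ : Hˣ) : H) ⊗ₜ[k] ((u⁻¹ : Hˣ) : H)) = 1 := by
    rw [hu, Algebra.TensorProduct.tmul_mul_tmul, Units.mul_inv]
    exact Algebra.TensorProduct.one_def.symm
  exact left_inv_eq_right_inv h1 h2

/-- Let `a, b, c ∈ H` be grouplike (invertible, `Δ(x) = x ⊗ x`, `ε(x) = 1`) with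
`ab = cba`, `ac = ca`, `bc = cb`.  Then `∂²(a ⊗ b) = 1 ⊗ c ⊗ c ⊗ 1`, where the
coboundary of the 2-cochain `a ⊗ b` is computed with its inverse `a⁻¹ ⊗ b⁻¹`, and
the coboundary of the resulting 3-cochain with any (two-sided) inverse of it.
In particular `∂(a ⊗ b)` need not be a 3-cocycle. -/
theorem del_squared_grouplike (a b c : Hˣ)
    (ha : Coalgebra.comul (R := k) (a : H) = (a : H) ⊗ₜ[k] (a : H))
    (hb : Coalgebra.comul (R := k) (b : H) = (b : H) ⊗ₜ[k] (b : H))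
    (hc : Coalgebra.comul (R := k) (c : H) = (c : H) ⊗ₜ[k] (c : H))
    (hεa : Coalgebra.counit (R := k) (a : H) = 1)
    (hεb : Coalgebra.counit (R := k) (b : H) = 1)
    (hεc : Coalgebra.counit (R := k) (c : H) = 1)
    (hab : (a : H) * b = (c : H) * b * a)
    (hac : (a : H) * c = (c : H) * a)
    (hbc : (b : H) * c = (c : H) * b) :
    ∀ Φinv : H ⊗[k] (H ⊗[k] H),
      del2 k H ((a : H) ⊗ₜ[k] (b : H)) (((a⁻¹ : Hˣ) : H) ⊗ₜ[k] ((b⁻¹ : Hˣ) : H)) * Φinv = 1 →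
      Φinv * del2 k H ((a : H) ⊗ₜ[k] (b : H)) (((a⁻¹ : Hˣ) : H) ⊗ₜ[k] ((b⁻¹ : Hˣ) : H)) = 1 →
        del3 k H (del2 k H ((a : H) ⊗ₜ[k] (b : H))
            (((a⁻¹ : Hˣ) : H) ⊗ₜ[k] ((b⁻¹ : Hˣ) : H))) Φinv =
          (1 : H) ⊗ₜ[k] ((c : H) ⊗ₜ[k] ((c : H) ⊗ₜ[k] (1 : H))) := by
  intro Φinv h1 h2
  have hΦ : del2 k H ((a : H) ⊗ₜ[k] (b : H)) (((a⁻¹ : Hˣ) : H) ⊗ₜ[k] ((b⁻¹ : Hˣ) : H)) =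
      ((a⁻¹ : Hˣ) : H) ⊗ₜ[k] ((c : H) ⊗ₜ[k] (b : H)) := by
    rw [del2]
    simp only [TensorProduct.map_tmul, TensorProduct.assoc_tmul, LinearMap.id_coe, id_eq,
      ha, hb, comul_unit_inv k H a ha, Algebra.TensorProduct.tmul_mul_tmul]
    congr 1
    · simp [mul_assoc]
    congr 1
    · calc (a:H) * b * ((a⁻¹:Hˣ):H) * ((b⁻¹:Hˣ):H)
          = (c:H) * b * a * ((a⁻¹:Hˣ):H) * ((b⁻¹:Hˣ):H) := by rw [hab]
        _ = c := by simp [mul_assoc]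
    · simp
  have hinv : Φinv = (a : H) ⊗ₜ[k] (((c⁻¹ : Hˣ) : H) ⊗ₜ[k] ((b⁻¹ : Hˣ) : H)) := by
    have hr : (((a⁻¹ : Hˣ) : H) ⊗ₜ[k] ((c : H) ⊗ₜ[k] (b : H))) *
        ((a : H) ⊗ₜ[k] (((c⁻¹ : Hˣ) : H) ⊗ₜ[k] ((b⁻¹ : Hˣ) : H))) = 1 := by
      rw [Algebra.TensorProduct.tmul_mul_tmul, Algebra.TensorProduct.tmul_mul_tmul]
      simp [Algebra.TensorProduct.one_def]
    rw [hΦ] at h2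
    exact left_inv_eq_right_inv h2 hr
  rw [hΦ, hinv, del3]
  simp only [TensorProduct.map_tmul, TensorProduct.assoc_tmul, LinearMap.id_coe, id_eq,
    LinearMap.coe_comp, Function.comp_apply, LinearEquiv.coe_coe, TensorProduct.mk_apply,
    LinearMap.flip_apply, ha, hb, hc, comul_unit_inv k H b hb, comul_unit_inv k H c hc,
    Algebra.TensorProduct.tmul_mul_tmul]
  have hCa : Commute ((a : H)) (c : H) := hac
  have hCb : Commute ((b : H)) (c : H) := hbc
  congr 1
  · simp [mul_assoc]
  congr 1
  · -- a⁻¹ * c * c * a * c⁻¹ = c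
    rw [(hCa.units_inv_left).eq, mul_assoc ((c : H)) (((a⁻¹ : Hˣ) : H)) ((c : H)),
      (hCa.units_inv_left).eq]
    simp [mul_assoc]
  congr 1
  · -- c * c * b * c⁻¹ * b⁻¹ = c
    rw [mul_assoc ((c : H) * (c : H)) ((b : H)) _, (hCb.units_inv_right).eq]
    simp [mul_assoc]
  · simp [mul_assoc]

end
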